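/- For every real r with 0 < r < 1, the map w ↦ c(w) = (w + w⁻¹)/2 restricts to a bijection from the annulus {w ∈ ℂ : r < |w| < 1} onto E_{c(r), s(r)} \ [−1,1], where c(r) = (r + r⁻¹)/2 and s(r) = (r − r⁻¹)/2 are real numbers and [−1,1] denotes the real segment {x + 0i : −1 ≤ x ≤ 1} inside ℂ. -/

import Mathlib

section aux

private lemma jou_re (w : ℂ) (hw : w ≠ 0) :
    ((w + w⁻¹) / 2).re = w.re * (Complex.normSq w + 1) / (2 * Complex.normSq w) := by
  have h : Complex.normSq w ≠ 0 := ne_of_gt (Complex.normSq_pos.2 hw)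
  simp [Complex.div_re, Complex.inv_re, Complex.normSq] at *
  have h' : w.re ^ 2 + w.im ^ 2 ≠ 0 := by rw [sq, sq]; exact h
  field_simp

private lemma jou_im (w : ℂ) (hw : w ≠ 0) :
    ((w + w⁻¹) / 2).im = w.im * (Complex.normSq w - 1) / (2 * Complex.normSq w) := by
  have h : Complex.normSq w ≠ 0 := ne_of_gt (Complex.normSq_pos.2 hw)
  simp [Complex.div_im, Complex.inv_im, Complex.normSq] at *
  have h' : w.re ^ 2 + w.im ^ 2 ≠ 0 := by rw [sq, sq]; exact h
  field_simp
  ring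

private lemma core_lt (r s : ℝ) (h1 : r^2 < s) (h2 : s < 1) :
    (s + 1)^2 * r^2 < s * (r^2 + 1)^2 ∧ (s - 1)^2 * r^2 < s * (r^2 - 1)^2 := by
  have key : (s - r^2) * (s * r^2 - 1) < 0 :=
    mul_neg_of_pos_of_neg (by linarith) (by nlinarith)
  constructor <;> nlinarith [key]

private lemma cleared_lt (r s a b : ℝ) (hr0 : 0 < r) (hr1 : r < 1) (hs : s = a^2+b^2)
    (h1 : r^2 < s) (h2 : s < 1) :
    a^2*(s+1)^2*r^2*(r^2-1)^2 + b^2*(s-1)^2*r^2*(r^2+1)^2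
      < s^2*(r^2+1)^2*(r^2-1)^2 := by
  have hs0 : 0 < s := lt_trans (by positivity) h1
  obtain ⟨k1, k2⟩ := core_lt r s h1 h2
  have hZ1 : (0:ℝ) < (r^2+1)^2 := by positivity
  have h12 : (0:ℝ) < 1 - r^2 := by nlinarith
  have hZ2 : (0:ℝ) < (r^2-1)^2 := by nlinarith [mul_pos h12 h12]
  have hA : 0 ≤ a^2*((r^2-1)^2*(s*(r^2+1)^2 - (s+1)^2*r^2)) :=
    mul_nonneg (sq_nonneg a) (mul_nonneg hZ2.le (by linarith))
  have hB : 0 ≤ b^2*((r^2+1)^2*(s*(r^2-1)^2 - (s-1)^2*r^2)) :=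
    mul_nonneg (sq_nonneg b) (mul_nonneg hZ1.le (by linarith))
  rcases eq_or_ne a 0 with ha | ha
  · have hb : 0 < b^2 := by nlinarith
    have hB' : 0 < b^2*((r^2+1)^2*(s*(r^2-1)^2 - (s-1)^2*r^2)) :=
      mul_pos hb (mul_pos hZ1 (by linarith))
    subst hs; nlinarith [hA, hB']
  · have ha' : 0 < a^2 := by positivity
    have hA' : 0 < a^2*((r^2-1)^2*(s*(r^2+1)^2 - (s+1)^2*r^2)) :=
      mul_pos ha' (mul_pos hZ2 (by linarith))
    subst hs; nlinarith [hA', hB]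

private lemma ell_lt (r s a b : ℝ) (hr0 : 0 < r) (hr1 : r < 1) (hs : s = a^2+b^2)
    (h1 : r^2 < s) (h2 : s < 1) :
    (a*(s+1)/(2*s) / ((r+r⁻¹)/2))^2 + (b*(s-1)/(2*s)/((r-r⁻¹)/2))^2 < 1 := by
  have hs0 : 0 < s := lt_trans (by positivity) h1
  have hr : r ≠ 0 := ne_of_gt hr0
  have hZ1 : (0:ℝ) < (r^2+1)^2 := by positivity
  have h12 : (0:ℝ) < 1 - r^2 := by nlinarith
  have hZ2 : (0:ℝ) < (r^2-1)^2 := by nlinarith [mul_pos h12 h12]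
  have hr2 : r^2 - 1 ≠ 0 := by nlinarith
  have hrr : r - r⁻¹ = (r^2-1)/r := by field_simp
  have hrp : r + r⁻¹ = (r^2+1)/r := by field_simp
  have e1 : (a*(s+1)/(2*s) / ((r+r⁻¹)/2))^2
      = a^2*((s+1)^2*r^2) / (s^2*(r^2+1)^2) := by
    rw [hrp]
    have h1' : r^2 + 1 ≠ 0 := by positivity
    field_simp
  have e2 : (b*(s-1)/(2*s) / ((r-r⁻¹)/2))^2
      = b^2*((s-1)^2*r^2) / (s^2*(r^2-1)^2) := by
    rw [hrr]
    field_simp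
  rw [e1, e2, div_add_div _ _ (by positivity) (by positivity),
    div_lt_one (by positivity)]
  nlinarith [cleared_lt r s a b hr0 hr1 hs h1 h2,
    mul_pos (mul_pos (pow_pos hs0 2) hZ1) hZ2, pow_pos hs0 2]

private lemma ell_ge (r s a b : ℝ) (hr0 : 0 < r) (hr1 : r < 1) (hs : s = a^2+b^2)
    (hs0 : 0 < s) (h1 : s ≤ r^2) :
    1 ≤ (a*(s+1)/(2*s) / ((r+r⁻¹)/2))^2 + (b*(s-1)/(2*s)/((r-r⁻¹)/2))^2 := by
  have hr : r ≠ 0 := ne_of_gt hr0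
  have hZ1 : (0:ℝ) < (r^2+1)^2 := by positivity
  have h12 : (0:ℝ) < 1 - r^2 := by nlinarith
  have hZ2 : (0:ℝ) < (r^2-1)^2 := by nlinarith [mul_pos h12 h12]
  have hr2 : r^2 - 1 ≠ 0 := by nlinarith
  have hrr : r - r⁻¹ = (r^2-1)/r := by field_simp
  have hrp : r + r⁻¹ = (r^2+1)/r := by field_simp
  have key : 0 ≤ (s - r^2) * (s * r^2 - 1) :=
    mul_nonneg_of_nonpos_of_nonpos (by linarith) (by nlinarith)
  have k1 : s * (r^2 + 1)^2 ≤ (s + 1)^2 * r^2 := by nlinarith [key]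
  have k2 : s * (r^2 - 1)^2 ≤ (s - 1)^2 * r^2 := by nlinarith [key]
  have hA : 0 ≤ a^2*((r^2-1)^2*((s+1)^2*r^2 - s*(r^2+1)^2)) :=
    mul_nonneg (sq_nonneg a) (mul_nonneg hZ2.le (by linarith))
  have hB : 0 ≤ b^2*((r^2+1)^2*((s-1)^2*r^2 - s*(r^2-1)^2)) :=
    mul_nonneg (sq_nonneg b) (mul_nonneg hZ1.le (by linarith))
  have cge : s^2*(r^2+1)^2*(r^2-1)^2
      ≤ a^2*(s+1)^2*r^2*(r^2-1)^2 + b^2*(s-1)^2*r^2*(r^2+1)^2 := by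
    subst hs; nlinarith [hA, hB]
  have e1 : (a*(s+1)/(2*s) / ((r+r⁻¹)/2))^2
      = a^2*((s+1)^2*r^2) / (s^2*(r^2+1)^2) := by
    rw [hrp]; have h1' : r^2 + 1 ≠ 0 := by positivity
    field_simp
  have e2 : (b*(s-1)/(2*s) / ((r-r⁻¹)/2))^2
      = b^2*((s-1)^2*r^2) / (s^2*(r^2-1)^2) := by
    rw [hrr]; field_simp
  rw [e1, e2, div_add_div _ _ (by positivity) (by positivity),
    one_le_div (by positivity)]
  nlinarith [cge, mul_pos (mul_pos (pow_pos hs0 2) hZ1) hZ2, pow_pos hs0 2]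

private lemma seg_gt (s a : ℝ) (hs0 : 0 < s) (h2 : s < 1) (hsa : s = a^2) :
    1 < (a*(s+1)/(2*s))^2 := by
  subst hsa
  have ha : a ≠ 0 := by intro h; rw [h] at hs0; simp at hs0
  have e : (a*(a^2+1)/(2*a^2))^2 = (a^2+1)^2/(4*a^2) := by
    field_simp; ring
  rw [e, lt_div_iff₀ (by positivity)]
  have h12 : (0:ℝ) < 1 - a^2 := by linarith
  nlinarith [mul_pos h12 h12]

end aux

/-- For `0 < r < 1`, the map `w ↦ (w + w⁻¹)/2` restricts to a bijection from the annulus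
`{w : r < |w| < 1}` onto the open ellipse `E_{c(r), s(r)}` minus the real segment `[-1,1]`,
where `c(r) = (r + r⁻¹)/2` and `s(r) = (r - r⁻¹)/2`. -/
theorem stmt_1 (r : ℝ) (hr0 : 0 < r) (hr1 : r < 1) :
    Set.BijOn (fun w : ℂ => (w + w⁻¹) / 2)
      {w : ℂ | r < ‖w‖ ∧ ‖w‖ < 1}
      ({z : ℂ | (z.re / ((r + r⁻¹) / 2)) ^ 2 + (z.im / ((r - r⁻¹) / 2)) ^ 2 < 1} \
        {z : ℂ | z.im = 0 ∧ -1 ≤ z.re ∧ z.re ≤ 1}) := by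
  refine ⟨?_, ?_, ?_⟩
  · -- MapsTo
    rintro w ⟨hwr, hw1⟩
    have hw0 : w ≠ 0 := by
      intro h; rw [h] at hwr; simp at hwr; linarith
    set s := Complex.normSq w with hsdef
    have hs : s = w.re^2 + w.im^2 := by
      rw [hsdef, Complex.normSq_apply]; ring
    have hab : ‖w‖ ^ 2 = s := Complex.sq_norm w
    have h1 : r^2 < s := by nlinarith [norm_nonneg w]
    have h2 : s < 1 := by nlinarith [norm_nonneg w]
    have hs0 : 0 < s := lt_trans (by positivity) h1
    have hre : ((w + w⁻¹) / 2).re = w.re * (s+1) / (2*s) := jou_re w hw0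
    have him : ((w + w⁻¹) / 2).im = w.im * (s-1) / (2*s) := jou_im w hw0
    simp only [Set.mem_diff, Set.mem_setOf_eq]
    constructor
    · rw [hre, him]
      exact ell_lt r s w.re w.im hr0 hr1 hs h1 h2
    · rintro ⟨him0, hge, hle⟩
      rw [him] at him0
      have hb0 : w.im = 0 := by
        have h2s : (2*s) ≠ 0 := by positivity
        rcases div_eq_zero_iff.mp him0 with h | h
        · rcases mul_eq_zero.mp h with h' | h'
          · exact h'
          · exfalso; linarith
        · exact absurd h h2s
      have hsa : s = w.re^2 := by rw [hs, hb0]; ring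
      have := seg_gt s w.re hs0 h2 hsa
      rw [hre] at hge hle
      nlinarith [this, hge, hle]
  · -- InjOn
    rintro w1 ⟨h11, h12⟩ w2 ⟨h21, h22⟩ heq
    have hw1 : w1 ≠ 0 := by
      intro h; rw [h] at h11; simp at h11; linarith
    have hw2 : w2 ≠ 0 := by
      intro h; rw [h] at h21; simp at h21; linarith
    simp only at heq
    field_simp at heq
    have hpoly : (w1 - w2) * (w1 * w2 - 1) = 0 := by
      linear_combination heq
    rcases mul_eq_zero.mp hpoly with h | h
    · exact sub_eq_zero.mp h
    · exfalso
      have : ‖w1‖ * ‖w2‖ = 1 := by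
        rw [← norm_mul]
        rw [sub_eq_zero.mp h]
        simp
      nlinarith [norm_nonneg w1, norm_nonneg w2]
  · -- SurjOn
    rintro z ⟨hell, hseg⟩
    obtain ⟨u, hu⟩ := IsAlgClosed.exists_pow_nat_eq (k := ℂ) (z^2 - 1) two_pos
    have hprod : (z + u) * (z - u) = 1 := by linear_combination -hu
    have habs : ‖z + u‖ * ‖z - u‖ = 1 := by
      rw [← norm_mul, hprod, norm_one]
    -- unit circle is excluded
    have hne1 : ‖z + u‖ ≠ 1 := by
      intro h1
      have hinv : (z + u)⁻¹ = z - u := inv_eq_of_mul_eq_one_right hprod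
      have hnorm : Complex.normSq (z + u) = 1 := by
        rw [← Complex.sq_norm, h1]; norm_num
      have hconj : (z + u)⁻¹ = (starRingEnd ℂ) (z + u) := by
        rw [Complex.inv_def, hnorm]; simp
      have hz2 : 2 * z = (z + u) + (starRingEnd ℂ) (z + u) := by
        rw [← hconj, hinv]; ring
      rw [Complex.add_conj] at hz2
      have hzre : z = (((z + u).re : ℝ) : ℂ) := by
        have h2 : (2:ℂ) ≠ 0 := two_ne_zero
        field_simp at hz2
        push_cast at hz2; linear_combination hz2 / 2
      apply hseg
      refine ⟨?_, ?_, ?_⟩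
      · rw [hzre]; simp
      · rw [hzre]; simp only [Complex.ofReal_re]
        have := Complex.abs_re_le_norm (z + u)
        rw [h1] at this
        exact (abs_le.mp this).1
      · rw [hzre]; simp only [Complex.ofReal_re]
        have := Complex.abs_re_le_norm (z + u)
        rw [h1] at this
        exact (abs_le.mp this).2
    -- pick the root inside the unit disc
    obtain ⟨w, hwabs, hwsum⟩ : ∃ w : ℂ, ‖w‖ < 1 ∧ w + w⁻¹ = 2 * z := by
      rcases lt_or_gt_of_ne hne1 with h | h
      · refine ⟨z + u, h, ?_⟩
        rw [inv_eq_of_mul_eq_one_right hprod]; ring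
      · refine ⟨z - u, ?_, ?_⟩
        · have hpos : 0 < ‖z + u‖ := by linarith
          have : ‖z - u‖ = (‖z + u‖)⁻¹ := by
            field_simp at habs ⊢; linarith [habs]
          rw [this]
          exact inv_lt_one_of_one_lt₀ h
        · rw [inv_eq_of_mul_eq_one_left hprod]; ring
    have hw0 : w ≠ 0 := by
      intro h
      rw [h] at hwsum
      simp at hwsum
      apply hseg
      have hz0 : z = 0 := by
        have h := hwsum
        first
        | exact h
        | exact h.symm
      rw [hz0]; norm_num
    have hz : (fun w : ℂ => (w + w⁻¹) / 2) w = z := by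
      simp only
      rw [hwsum, mul_div_cancel_left₀ z two_ne_zero]
    -- show r < |w|
    set s := Complex.normSq w with hsdef
    have hs : s = w.re^2 + w.im^2 := by rw [hsdef, Complex.normSq_apply]; ring
    have hs0 : 0 < s := Complex.normSq_pos.2 hw0
    have hrw : r < ‖w‖ := by
      by_contra hle
      push_neg at hle
      have h1 : s ≤ r^2 := by
        rw [hsdef, ← Complex.sq_norm w]
        exact pow_le_pow_left₀ (norm_nonneg w) hle 2
      have hre : z.re = w.re * (s+1) / (2*s) := by rw [← hz]; exact jou_re w hw0
      have him : z.im = w.im * (s-1) / (2*s) := by rw [← hz]; exact jou_im w hw0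
      have := ell_ge r s w.re w.im hr0 hr1 hs hs0 h1
      rw [← hre, ← him] at this
      have hell' : (z.re / ((r + r⁻¹) / 2)) ^ 2 + (z.im / ((r - r⁻¹) / 2)) ^ 2 < 1 := hell
      linarith
    exact ⟨w, ⟨hrw, hwabs⟩, hz⟩
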